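/- There is no continuous map g : {0,1} × 2^ω → {0,1} × 2^ω reducing 𝔼₃ to 𝔼₅, where, for ℂ := P_∞ ⊆ 2^ω, 𝔼₃ is defined by (ε,α) 𝔼₃ (η,β) ⇔ (ε,α) = (η,β) ∨ (α = β ∈ ℂ), and 𝔼₅ is defined by (ε,α) 𝔼₅ (η,β) ⇔ (ε,α) = (η,β) ∨ (α = β ∈ ℂ) ∨ (ε = η ∧ α,β ∉ ℂ). -/

import Mathlib

/-- The set of binary sequences with infinitely many ones. -/
def Pinf : Set (ℕ → Bool) := {α | ∀ N : ℕ, ∃ n ≥ N, α n = true}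

/-- The equivalence relation 𝔼₃ on 2 × 2^ω (for ℂ = P_∞). -/
def E3 (p q : Bool × (ℕ → Bool)) : Prop := p = q ∨ (p.2 = q.2 ∧ p.2 ∈ Pinf)

/-- The equivalence relation 𝔼₅ on 2 × 2^ω (for ℂ = P_∞). -/
def E5 (p q : Bool × (ℕ → Bool)) : Prop :=
  p = q ∨ (p.2 = q.2 ∧ p.2 ∈ Pinf) ∨ (p.1 = q.1 ∧ p.2 ∉ Pinf ∧ q.2 ∉ Pinf)

theorem no_continuous_reduction_E3_to_E5 :
    ¬ ∃ g : Bool × (ℕ → Bool) → Bool × (ℕ → Bool),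
        Continuous g ∧ ∀ p q, (E3 p q ↔ E5 (g p) (g q)) := by
  rintro ⟨g, hg, hred⟩
  -- second coordinate of g
  set f : Bool → (ℕ → Bool) → (ℕ → Bool) := fun ε α => (g (ε, α)).2 with hfdef
  have hfc : ∀ ε : Bool, Continuous (f ε) := fun ε =>
    ((hg.comp (Continuous.prodMk_right ε)).snd)
  -- bad sets are subsingletons
  set B : Bool → Bool → Set (ℕ → Bool) :=
    fun ε i => {α | (g (ε, α)).1 = i ∧ (g (ε, α)).2 ∉ Pinf} with hBdef
  have hB : ∀ ε i, (B ε i).Subsingleton := by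
    intro ε i α hα β hβ
    have h5 : E5 (g (ε, α)) (g (ε, β)) :=
      Or.inr (Or.inr ⟨hα.1.trans hβ.1.symm, hα.2, hβ.2⟩)
    have h3 := (hred _ _).mpr h5
    rcases h3 with h | h
    · exact congrArg Prod.snd h
    · exact h.1
  -- exceptional set
  set Exc : Set (ℕ → Bool) := {α | ∃ ε : Bool, (g (ε, α)).2 ∉ Pinf} with hExcdef
  have hExcfin : Exc.Finite := by
    have hsub : Exc ⊆ ⋃ (ε : Bool) (i : Bool), B ε i := by
      rintro α ⟨ε, hε⟩
      exact Set.mem_iUnion.2 ⟨ε, Set.mem_iUnion.2 ⟨(g (ε, α)).1, rfl, hε⟩⟩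
    exact ((Set.finite_iUnion fun ε =>
      Set.finite_iUnion fun i => (hB ε i).finite)).subset hsub
  -- key equivalence outside Exc
  have key : ∀ α, α ∉ Exc → (α ∈ Pinf ↔ f false α = f true α) := by
    intro α hα
    have hmem : ∀ ε : Bool, (g (ε, α)).2 ∈ Pinf := by
      intro ε; by_contra h; exact hα ⟨ε, h⟩
    constructor
    · intro hP
      have h3 : E3 (false, α) (true, α) := Or.inr ⟨rfl, hP⟩
      have h5 := (hred _ _).mp h3
      rcases h5 with h | h | h
      · exact congrArg Prod.snd h
      · exact h.1
      · exact absurd (hmem false) h.2.1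
    · intro hfe
      by_contra hP
      have h5 : E5 (g (false, α)) (g (true, α)) :=
        Or.inr (Or.inl ⟨hfe, hmem false⟩)
      have h3 := (hred _ _).mpr h5
      rcases h3 with h | h
      · exact Bool.false_ne_true (congrArg Prod.fst h)
      · exact hP h.2
  -- the closed set where f false = f true
  set D : Set (ℕ → Bool) := {α | f false α = f true α} with hDdef
  have hD : IsClosed D := isClosed_eq (hfc false) (hfc true)
  -- points with finitely many ones
  set β : ℕ → ℕ → Bool := fun k n => decide (n < k) with hβdef
  have hβinj : Function.Injective β := by
    intro k k' h
    by_contra hne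
    rcases lt_or_gt_of_ne hne with hlt | hlt
    · have := congrFun h k
      simp [hβdef, hlt] at this
    · have := congrFun h k'
      simp [hβdef, hlt] at this
  have hβnP : ∀ k, β k ∉ Pinf := by
    intro k hk
    obtain ⟨n, hn, ht⟩ := hk k
    simp [hβdef] at ht
    exact absurd ht (Nat.not_lt.2 hn)
  -- choose k with β k not exceptional
  have hpre : (β ⁻¹' Exc).Finite := hExcfin.preimage hβinj.injOn
  obtain ⟨k, hk⟩ := hpre.infinite_compl.nonempty
  -- approximants: β k with ones from m on
  set a : ℕ → ℕ → Bool := fun m n => decide (n < k) || decide (m ≤ n) with hadef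
  have haP : ∀ m, a m ∈ Pinf := by
    intro m N
    refine ⟨max N m, le_max_left _ _, ?_⟩
    simp [hadef, le_max_right N m]
  have hainj : Set.InjOn a (Set.Ici k) := by
    intro m hm m' hm' h
    by_contra hne
    rcases lt_or_gt_of_ne hne with hlt | hlt
    · have := congrFun h m
      simp [hadef, Nat.not_lt.2 hm, Nat.not_le.2 hlt] at this
    · have := congrFun h m'
      simp [hadef, Nat.not_lt.2 hm', Nat.not_le.2 hlt] at this
  have hTfin : {m | k ≤ m ∧ a m ∈ Exc}.Finite := by
    apply Set.Finite.of_finite_image (f := a)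
    · exact hExcfin.subset (by rintro x ⟨m, ⟨_, hm⟩, rfl⟩; exact hm)
    · exact hainj.mono (fun m hm => hm.1)
  have hev : ∀ᶠ m in Filter.atTop, a m ∉ Exc := by
    have h2 : ∀ᶠ m in Filter.atTop, m ∉ {m | k ≤ m ∧ a m ∈ Exc} := by
      rw [← Nat.cofinite_eq_atTop]
      exact hTfin.eventually_cofinite_notMem
    filter_upwards [Filter.eventually_ge_atTop k, h2] with m hm hmT hExc
    exact hmT ⟨hm, hExc⟩
  have htend : Filter.Tendsto a Filter.atTop (nhds (β k)) := by
    rw [tendsto_pi_nhds]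
    intro n
    apply Filter.Tendsto.congr' _ tendsto_const_nhds
    filter_upwards [Filter.eventually_gt_atTop n] with m hm
    simp [hadef, hβdef, Nat.not_le.2 hm]
  have haD : ∀ᶠ m in Filter.atTop, a m ∈ D := by
    filter_upwards [hev] with m hm
    exact (key (a m) hm).mp (haP m)
  have hβD : β k ∈ D := by
    have := mem_closure_of_tendsto htend haD
    rwa [hD.closure_eq] at this
  exact hβnP k ((key (β k) hk).mpr hβD)
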